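/- Fix an even integer T ≥ 2 and a partition of the finite set O into T/2 pairwise disjoint subsets O̅_1, …, O̅_{T/2} with union O; set O_k := O \ O̅_k for each k. For each pair of consecutive blocks (t, t+1) with 1 ≤ t ≤ T−1 and each n ∈ O there are exactly two coupling equations, each of which must be assigned to block t or to block t+1. Then there exists an assignment x : {1,…,T−1} × O → {0,1,2} (x(t,n) being the number of the two coupling equations of bus n in pair (t,t+1) assigned to block t, the remaining 2 − x(t,n) going to block t+1) such that for every block s ∈ {1,…,T} and every n ∈ O, the total number of coupling equations of bus n assigned to block s — namely x(s,n)·[s ≤ T−1] + (2 − x(s−1,n))·[s ≥ 2] — equals 2 if n ∈ O_{⌈s/2⌉} and equals 1 if n ∈ O̅_{⌈s/2⌉}. (In words: the coupling equations assigned to the two successive blocks s = 2k−1 and s = 2k have the sparsity pattern of the multiset O ∪ O_k.) -/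
import Mathlib


open Classical in

/-- Lemma (allocation of coupling equations): given an even `T ≥ 2` and a
partition of the non-metered buses `O` into `T/2` subsets `O̅_1, …, O̅_{T/2}`
(with `O_k := O \ O̅_k`), the two coupling equations of each bus `n ∈ O` in
each pair `(t, t+1)` of consecutive blocks can be split between blocks `t`
and `t+1` so that each block `s` receives, for every bus `n`, exactly two
coupling equations of bus `n` if `n ∈ O_{⌈s/2⌉}` and exactly one if
`n ∈ O̅_{⌈s/2⌉}`; i.e., the coupling equations assigned to the successive
blocks `2k−1` and `2k` have the sparsity pattern of the multiset `O ∪ O_k`. -/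
theorem coupling_equation_allocation
    {O : Type*} [Fintype O] (T : ℕ) (hT : 2 ≤ T) (hTeven : Even T)
    (Obar : ℕ → Set O)
    (hdisj : ∀ k l, 1 ≤ k → k ≤ T / 2 → 1 ≤ l → l ≤ T / 2 → k ≠ l →
      Disjoint (Obar k) (Obar l))
    (hcover : (⋃ k ∈ Finset.Icc 1 (T / 2), Obar k) = Set.univ) :
    ∃ x : ℕ → O → ℕ,
      (∀ t n, 1 ≤ t → t ≤ T - 1 → x t n ≤ 2) ∧
      ∀ s, 1 ≤ s → s ≤ T → ∀ n : O,
        (if s ≤ T - 1 then x s n else 0) +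
          (if 2 ≤ s then 2 - x (s - 1) n else 0) =
        (if n ∈ Obar ((s + 1) / 2) then 1 else 2) := by
  obtain ⟨m, hm⟩ := hTeven
  have hex : ∀ n : O, ∃ k, 1 ≤ k ∧ k ≤ T / 2 ∧ n ∈ Obar k := by
    intro n
    have h : n ∈ (⋃ k ∈ Finset.Icc 1 (T / 2), Obar k) := hcover ▸ Set.mem_univ n
    simp only [Set.mem_iUnion, Finset.mem_Icc] at h
    obtain ⟨k, ⟨h1, h2⟩, h3⟩ := h
    exact ⟨k, h1, h2, h3⟩
  choose κ hκ1 hκ2 hκ3 using hex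
  refine ⟨fun t n => min 2 (2 * κ n - t), fun t n _ _ => min_le_left _ _, ?_⟩
  intro s hs1 hs2 n
  have hmem : n ∈ Obar ((s + 1) / 2) ↔ (s + 1) / 2 = κ n := by
    constructor
    · intro h
      by_contra hne
      have h1 : 1 ≤ (s + 1) / 2 := by omega
      have h2 : (s + 1) / 2 ≤ T / 2 := by omega
      exact Set.disjoint_left.mp (hdisj _ _ h1 h2 (hκ1 n) (hκ2 n) hne) h (hκ3 n)
    · intro h; rw [h]; exact hκ3 n
  have h1 := hκ1 n
  have h2 := hκ2 n
  beta_reduce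
  by_cases h : n ∈ Obar ((s + 1) / 2)
  · rw [if_pos h]
    have hk := hmem.mp h
    split_ifs <;> omega
  · rw [if_neg h]
    have hk : (s + 1) / 2 ≠ κ n := fun e => h (hmem.mpr e)
    split_ifs <;> omega
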